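/- Let (M, 𝓛) be a finite linear space in which every line is either affine or projective, and suppose that both an affine line and a projective line exist. Form the extended incidence structure whose point set is M together with one additional point ∞, and whose lines are the projective lines of 𝓛 together with the sets A ∪ {∞} for each affine line A of 𝓛. Then in this extended structure any two distinct points lie on exactly one common line, any two distinct lines meet in exactly one point, and there exist four points no three of which are collinear; i.e., the extended structure is a projective plane. -/
import Mathlib


/-- A linear space: a point set `M` together with a collection of lines (subsets of `M`)
such that every line has at least 3 points, any two distinct points lie on exactly one
common line, and every point lies on at least 3 lines. -/
structure LinearSpace (M : Type*) where
  lines : Set (Set M)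
  exists_three_points : ∀ L ∈ lines, ∃ a b c : M,
    a ∈ L ∧ b ∈ L ∧ c ∈ L ∧ a ≠ b ∧ a ≠ c ∧ b ≠ c
  join_unique : ∀ p q : M, p ≠ q → ∃! L, L ∈ lines ∧ p ∈ L ∧ q ∈ L
  exists_three_lines : ∀ p : M, ∃ L₁ L₂ L₃, L₁ ∈ lines ∧ L₂ ∈ lines ∧ L₃ ∈ lines ∧
    p ∈ L₁ ∧ p ∈ L₂ ∧ p ∈ L₃ ∧ L₁ ≠ L₂ ∧ L₁ ≠ L₃ ∧ L₂ ≠ L₃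

namespace LinearSpace

variable {M : Type*}

/-- Two lines are parallel if they are equal or disjoint. -/
def Parallel (L K : Set M) : Prop := L = K ∨ L ∩ K = ∅

/-- A line `L` is affine if for every point `p ∉ L` there is exactly one line
through `p` disjoint from `L`. -/
def IsAffine (S : LinearSpace M) (L : Set M) : Prop :=
  L ∈ S.lines ∧ ∀ p ∉ L, ∃! K, K ∈ S.lines ∧ p ∈ K ∧ K ∩ L = ∅

/-- A line is projective if it meets every other line. -/
def IsProjective (S : LinearSpace M) (L : Set M) : Prop :=
  L ∈ S.lines ∧ ∀ K ∈ S.lines, K ≠ L → (L ∩ K).Nonempty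

/-- An affine line is biaffine if every line parallel to it is also affine. -/
def IsBiaffine (S : LinearSpace M) (L : Set M) : Prop :=
  S.IsAffine L ∧ ∀ K ∈ S.lines, Parallel K L → S.IsAffine K

end LinearSpace

open LinearSpace

/-- The lines of the extended incidence structure obtained by adding one point `∞`
(here: `none : Option M`): the projective lines of `S` (copied over), together with
`A ∪ {∞}` for each affine line `A` of `S`. -/
def LinearSpace.extLines {M : Type*} (S : LinearSpace M) : Set (Set (Option M)) :=
  {K | ∃ L : Set M, S.IsProjective L ∧ K = (some '' L)} ∪
  {K | ∃ A : Set M, S.IsAffine A ∧ K = insert (none : Option M) (some '' A)}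

namespace LinearSpace

variable {M : Type*} (S : LinearSpace M)

noncomputable def join (p q : M) (h : p ≠ q) : Set M :=
  (S.join_unique p q h).exists.choose

lemma join_spec (p q : M) (h : p ≠ q) :
    S.join p q h ∈ S.lines ∧ p ∈ S.join p q h ∧ q ∈ S.join p q h :=
  (S.join_unique p q h).exists.choose_spec

lemma join_eq {p q : M} (h : p ≠ q) {L : Set M}
    (hL : L ∈ S.lines) (hp : p ∈ L) (hq : q ∈ L) : L = S.join p q h := by
  obtain ⟨K, hK, huniq⟩ := S.join_unique p q h
  rw [huniq L ⟨hL, hp, hq⟩, huniq _ (S.join_spec p q h)]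

lemma inter_subsingleton {L K : Set M} (hL : L ∈ S.lines) (hK : K ∈ S.lines)
    (hne : L ≠ K) : (L ∩ K).Subsingleton := by
  intro x hx y hy
  by_contra hxy
  exact hne ((S.join_eq hxy hL hx.1 hy.1).trans (S.join_eq hxy hK hx.2 hy.2).symm)

lemma exists_two_off {L : Set M} (hL : L ∈ S.lines) :
    ∃ x y : M, x ∉ L ∧ y ∉ L ∧ x ≠ y := by
  obtain ⟨a, b, c, haL, _, _, _, _, _⟩ := S.exists_three_points L hL
  obtain ⟨L₁, L₂, L₃, h1, h2, h3, hp1, hp2, hp3, h12, h13, h23⟩ := S.exists_three_lines a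
  obtain ⟨K, hK, haK, hKL⟩ : ∃ K, K ∈ S.lines ∧ a ∈ K ∧ K ≠ L := by
    by_cases hL1 : L₁ = L
    · exact ⟨L₂, h2, hp2, by rw [← hL1]; exact h12.symm⟩
    · exact ⟨L₁, h1, hp1, hL1⟩
  obtain ⟨x, y, z, hx, hy, hz, hxy, hxz, hyz⟩ := S.exists_three_points K hK
  have key : ∀ w ∈ K, w ≠ a → w ∉ L := by
    intro w hw hwa hwL
    exact hKL (((S.join_eq (Ne.symm hwa) hK haK hw).trans
      (S.join_eq (Ne.symm hwa) hL haL hwL).symm))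
  by_cases hxa : x = a
  · exact ⟨y, z, key y hy (fun h => hxy (hxa.trans h.symm)), key z hz (fun h => hxz (hxa.trans h.symm)), hyz⟩
  · by_cases hya : y = a
    · exact ⟨x, z, key x hx hxa, key z hz (fun h => hyz (hya.trans h.symm)), hxz⟩
    · exact ⟨x, y, key x hx hxa, key y hy hya, hxy⟩

lemma not_affine_and_projective {L : Set M} (h1 : S.IsAffine L) (h2 : S.IsProjective L) :
    False := by
  obtain ⟨x, y, hx, hy, hxy⟩ := S.exists_two_off h1.1
  obtain ⟨K, ⟨hK, hxK, hKL⟩, -⟩ := h1.2 x hx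
  have hne : K ≠ L := fun h => hx (h ▸ hxK)
  obtain ⟨z, hz⟩ := h2.2 K hK hne
  exact absurd (Set.mem_inter hz.2 hz.1) (by rw [hKL]; exact Set.notMem_empty z)

end LinearSpace

namespace LinearSpace

variable {M : Type*} (S : LinearSpace M)

def linesThrough (p : M) : Set (Set M) := {K | K ∈ S.lines ∧ p ∈ K}

lemma three_le_ncard [Finite M] {L : Set M} (hL : L ∈ S.lines) : 3 ≤ L.ncard := by
  obtain ⟨a, b, c, ha, hb, hc, hab, hac, hbc⟩ := S.exists_three_points L hL
  have hsub : {a, b, c} ⊆ L := by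
    intro x hx
    rcases hx with rfl | rfl | rfl <;> assumption
  have h3 : ({a, b, c} : Set M).ncard = 3 := by
    rw [Set.ncard_insert_of_notMem (by simp [hab, hac]) (Set.toFinite _),
      Set.ncard_insert_of_notMem (by simp [hbc]) (Set.toFinite _), Set.ncard_singleton]
  calc 3 = ({a, b, c} : Set M).ncard := h3.symm
    _ ≤ L.ncard := Set.ncard_le_ncard hsub (Set.toFinite _)

variable [Finite M]

lemma ncard_linesThrough {L : Set M} {p : M} (hL : L ∈ S.lines) (hp : p ∉ L) :
    (S.linesThrough p).ncard =
      L.ncard + {K | K ∈ S.lines ∧ p ∈ K ∧ K ∩ L = ∅}.ncard := by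
  classical
  set meet := {K | K ∈ S.lines ∧ p ∈ K ∧ (K ∩ L).Nonempty} with hmeetdef
  set miss := {K | K ∈ S.lines ∧ p ∈ K ∧ K ∩ L = ∅} with hmissdef
  have hsplit : S.linesThrough p = meet ∪ miss := by
    ext K
    constructor
    · rintro ⟨hK, hpK⟩
      rcases (K ∩ L).eq_empty_or_nonempty with h | h
      · exact Or.inr ⟨hK, hpK, h⟩
      · exact Or.inl ⟨hK, hpK, h⟩
    · rintro (⟨hK, hpK, -⟩ | ⟨hK, hpK, -⟩) <;> exact ⟨hK, hpK⟩
  have hdisj : Disjoint meet miss := by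
    rw [Set.disjoint_left]
    rintro K ⟨-, -, hne⟩ ⟨-, -, hemp⟩
    rw [hemp] at hne
    exact Set.not_nonempty_empty hne
  have hmcard : meet.ncard = L.ncard := by
    set f : M → Set M := fun x => if h : p ≠ x then S.join p x h else ∅ with hf
    have himg : f '' L = meet := by
      ext K
      constructor
      · rintro ⟨x, hxL, rfl⟩
        have hpx : p ≠ x := fun h => hp (h ▸ hxL)
        obtain ⟨h1, h2, h3⟩ := S.join_spec p x hpx
        simp only [hf, dif_pos hpx]
        exact ⟨h1, h2, ⟨x, h3, hxL⟩⟩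
      · rintro ⟨hK, hpK, x, hxK, hxL⟩
        have hpx : p ≠ x := fun h => hp (h ▸ hxL)
        refine ⟨x, hxL, ?_⟩
        simp only [hf, dif_pos hpx]
        exact (S.join_eq hpx hK hpK hxK).symm
    have hinj : Set.InjOn f L := by
      intro x hx y hy hxy
      have hpx : p ≠ x := fun h => hp (h ▸ hx)
      have hpy : p ≠ y := fun h => hp (h ▸ hy)
      simp only [hf, dif_pos hpx, dif_pos hpy] at hxy
      have hKL : S.join p x hpx ≠ L := fun h => hp (h ▸ (S.join_spec p x hpx).2.1)
      exact S.inter_subsingleton (S.join_spec p x hpx).1 hL hKL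
        ⟨(S.join_spec p x hpx).2.2, hx⟩
        ⟨by rw [hxy]; exact (S.join_spec p y hpy).2.2, hy⟩
    rw [← himg, Set.ncard_image_of_injOn hinj]
  rw [hsplit, Set.ncard_union_eq hdisj (Set.toFinite _) (Set.toFinite _), hmcard]

lemma deg_affine {L : Set M} {p : M} (hL : S.IsAffine L) (hp : p ∉ L) :
    (S.linesThrough p).ncard = L.ncard + 1 := by
  rw [S.ncard_linesThrough hL.1 hp]
  congr 1
  obtain ⟨K, hK, huniq⟩ := hL.2 p hp
  have h1 : {K' | K' ∈ S.lines ∧ p ∈ K' ∧ K' ∩ L = ∅} = {K} :=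
    Set.eq_singleton_iff_unique_mem.mpr ⟨hK, huniq⟩
  rw [h1, Set.ncard_singleton]

lemma deg_proj {L : Set M} {p : M} (hL : S.IsProjective L) (hp : p ∉ L) :
    (S.linesThrough p).ncard = L.ncard := by
  have h0 : {K | K ∈ S.lines ∧ p ∈ K ∧ K ∩ L = ∅} = ∅ := by
    ext K
    simp only [Set.mem_setOf_eq, Set.mem_empty_iff_false, iff_false, not_and]
    intro hK hpK hemp
    have hne : K ≠ L := fun h => hp (h ▸ hpK)
    obtain ⟨z, hz⟩ := hL.2 K hK hne
    rw [Set.inter_comm] at hemp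
    rw [hemp] at hz
    exact Set.notMem_empty z hz
  rw [S.ncard_linesThrough hL.1 hp, h0, Set.ncard_empty, add_zero]

end LinearSpace

namespace LinearSpace

variable {M : Type*} (S : LinearSpace M)

/-- The parallel class of a line: the line itself together with all lines disjoint from it. -/
def cls (X : Set M) : Set (Set M) := {D | D ∈ S.lines ∧ (D = X ∨ D ∩ X = ∅)}

lemma mem_cls_self {X : Set M} (hX : X ∈ S.lines) : X ∈ S.cls X := ⟨hX, Or.inl rfl⟩

lemma cls_disjoint {X : Set M} (hX : S.IsAffine X) :
    ∀ D₁ ∈ S.cls X, ∀ D₂ ∈ S.cls X, D₁ ≠ D₂ → D₁ ∩ D₂ = ∅ := by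
  rintro D₁ ⟨h1, e1⟩ D₂ ⟨h2, e2⟩ hne
  by_contra h
  obtain ⟨x, hx1, hx2⟩ := Set.nonempty_iff_ne_empty.mpr h
  rcases e1 with rfl | e1
  · rcases e2 with rfl | e2
    · exact hne rfl
    · have hx : x ∈ D₂ ∩ D₁ := ⟨hx2, hx1⟩
      rw [e2] at hx
      exact Set.notMem_empty x hx
  · rcases e2 with rfl | e2
    · have hx : x ∈ D₁ ∩ D₂ := ⟨hx1, hx2⟩
      rw [e1] at hx
      exact Set.notMem_empty x hx
    · have hxX : x ∉ X := by
        intro hxX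
        have hx : x ∈ D₁ ∩ X := ⟨hx1, hxX⟩
        rw [e1] at hx
        exact Set.notMem_empty x hx
      obtain ⟨K, hK, huniq⟩ := hX.2 x hxX
      exact hne ((huniq D₁ ⟨h1, hx1, e1⟩).trans (huniq D₂ ⟨h2, hx2, e2⟩).symm)

lemma cls_cover {X : Set M} (hX : S.IsAffine X) (x : M) : ∃ D ∈ S.cls X, x ∈ D := by
  by_cases hx : x ∈ X
  · exact ⟨X, S.mem_cls_self hX.1, hx⟩
  · obtain ⟨K, ⟨hK, hxK, hdisj⟩, -⟩ := hX.2 x hx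
    exact ⟨K, ⟨hK, Or.inr hdisj⟩, hxK⟩

lemma affine_of_disjoint (hdich : ∀ L ∈ S.lines, S.IsAffine L ∨ S.IsProjective L)
    {A K : Set M} (hA : S.IsAffine A) (hK : K ∈ S.lines) (hd : K ∩ A = ∅) :
    S.IsAffine K := by
  rcases hdich K hK with h | h
  · exact h
  · exfalso
    have hAne : A.Nonempty := by
      obtain ⟨u, -, -, hu, -⟩ := S.exists_three_points A hA.1
      exact ⟨u, hu⟩
    have hne : A ≠ K := by
      rintro rfl
      rw [Set.inter_self] at hd
      exact hAne.ne_empty hd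
    obtain ⟨z, hz⟩ := h.2 A hA.1 hne
    have : z ∈ K ∩ A := hz
    rw [hd] at this
    exact Set.notMem_empty z this

lemma cls_affine (hdich : ∀ L ∈ S.lines, S.IsAffine L ∨ S.IsProjective L)
    {X : Set M} (hX : S.IsAffine X) : ∀ D ∈ S.cls X, S.IsAffine D := by
  rintro D ⟨hD, rfl | hdisj⟩
  · exact hX
  · exact S.affine_of_disjoint hdich hX hD hdisj

lemma cls_ncard [Finite M]
    (hdich : ∀ L ∈ S.lines, S.IsAffine L ∨ S.IsProjective L)
    {X P : Set M} (hX : S.IsAffine X) (hP : S.IsProjective P) :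
    (S.cls X).ncard = P.ncard := by
  classical
  obtain ⟨p₀, -, -, hp₀, -⟩ := S.exists_three_points P hP.1
  have hmeets : ∀ D ∈ S.cls X, (P ∩ D).Nonempty := by
    intro D hD
    have hDaff := S.cls_affine hdich hX D hD
    have hDP : D ≠ P := fun h => S.not_affine_and_projective (h ▸ hDaff) hP
    exact hP.2 D hD.1 hDP
  set f : Set M → M := fun D => if h : (P ∩ D).Nonempty then h.choose else p₀ with hf
  have hfmem : ∀ D ∈ S.cls X, f D ∈ P ∩ D := by
    intro D hD
    simp only [hf, dif_pos (hmeets D hD)]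
    exact (hmeets D hD).choose_spec
  have himg : f '' S.cls X = P := by
    ext x
    constructor
    · rintro ⟨D, hD, rfl⟩
      exact (hfmem D hD).1
    · intro hxP
      obtain ⟨D, hD, hxD⟩ := S.cls_cover hX x
      refine ⟨D, hD, ?_⟩
      have hDaff := S.cls_affine hdich hX D hD
      have hDP : P ≠ D := fun h => S.not_affine_and_projective (h ▸ hDaff) hP
      exact S.inter_subsingleton hP.1 hD.1 hDP (hfmem D hD) ⟨hxP, hxD⟩
  have hinj : Set.InjOn f (S.cls X) := by
    intro D₁ h1 D₂ h2 heq
    by_contra hne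
    have hd := S.cls_disjoint hX D₁ h1 D₂ h2 hne
    have hx : f D₁ ∈ D₁ ∩ D₂ := ⟨(hfmem D₁ h1).2, by rw [heq]; exact (hfmem D₂ h2).2⟩
    rw [hd] at hx
    exact Set.notMem_empty _ hx
  rw [← himg, Set.ncard_image_of_injOn hinj]

lemma affine_parallel [Finite M]
    (hdich : ∀ L ∈ S.lines, S.IsAffine L ∨ S.IsProjective L)
    (hex_proj : ∃ L : Set M, S.IsProjective L)
    {A B : Set M} (hA : S.IsAffine A) (hB : S.IsAffine B) :
    A = B ∨ A ∩ B = ∅ := by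
  classical
  by_contra hcon
  push_neg at hcon
  obtain ⟨hAB, hne⟩ := hcon
  obtain ⟨p, hpA, hpB⟩ := hne
  obtain ⟨P₀, hP₀⟩ := hex_proj
  have hABsub : (A ∩ B).Subsingleton := S.inter_subsingleton hA.1 hB.1 hAB
  have hABp : ∀ x, x ∈ A → x ∈ B → x = p := fun x hx1 hx2 =>
    hABsub ⟨hx1, hx2⟩ ⟨hpA, hpB⟩
  obtain ⟨L₁, L₂, L₃, h1, h2, h3, hp1, hp2, hp3, h12, h13, h23⟩ := S.exists_three_lines p
  obtain ⟨L, hL, hpL, hLA, hLB⟩ : ∃ L, L ∈ S.lines ∧ p ∈ L ∧ L ≠ A ∧ L ≠ B := by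
    by_cases c1a : L₁ = A
    · by_cases c2b : L₂ = B
      · exact ⟨L₃, h3, hp3, fun h => h13 (c1a ▸ h ▸ rfl), fun h => h23 (c2b ▸ h ▸ rfl)⟩
      · by_cases c2a : L₂ = A
        · exact absurd (c1a.trans c2a.symm) h12
        · exact ⟨L₂, h2, hp2, c2a, c2b⟩
    · by_cases c1b : L₁ = B
      · by_cases c2a : L₂ = A
        · exact ⟨L₃, h3, hp3, fun h => h23 (c2a ▸ h ▸ rfl), fun h => h13 (c1b ▸ h ▸ rfl)⟩
        · by_cases c2b : L₂ = B
          · exact absurd (c1b.trans c2b.symm) h12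
          · exact ⟨L₂, h2, hp2, c2a, c2b⟩
      · exact ⟨L₁, h1, hp1, c1a, c1b⟩
  obtain ⟨x₁, y₁, z₁, hx₁L, hy₁L, hz₁L, hxy₁, hxz₁, hyz₁⟩ := S.exists_three_points L hL
  obtain ⟨q, hqL, hqp⟩ : ∃ q, q ∈ L ∧ q ≠ p := by
    by_cases h : x₁ = p
    · exact ⟨y₁, hy₁L, fun e => hxy₁ (h.trans e.symm)⟩
    · exact ⟨x₁, hx₁L, h⟩
  have hqA : q ∉ A := fun h =>
    hqp (S.inter_subsingleton hL hA.1 hLA ⟨hqL, h⟩ ⟨hpL, hpA⟩)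
  have hqB : q ∉ B := fun h =>
    hqp (S.inter_subsingleton hL hB.1 hLB ⟨hqL, h⟩ ⟨hpL, hpB⟩)
  set a := A.ncard with ha
  have ha3 : 3 ≤ a := S.three_le_ncard hA.1
  have hBa : B.ncard = a := by
    have e1 := S.deg_affine hA hqA
    have e2 := S.deg_affine hB hqB
    omega
  have hdeg : ∀ x : M, x ≠ p → (S.linesThrough x).ncard = a + 1 := by
    intro x hxp
    by_cases hx : x ∈ A
    · have hxB : x ∉ B := fun h => hxp (hABp x hx h)
      rw [S.deg_affine hB hxB, hBa]
    · rw [S.deg_affine hA hx]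
  have hsize : ∀ C : Set M, S.IsAffine C → C.ncard = a := by
    intro C hC
    obtain ⟨x, y, hxC, hyC, hxy⟩ := S.exists_two_off hC.1
    obtain ⟨z, hzC, hzp⟩ : ∃ z, z ∉ C ∧ z ≠ p := by
      by_cases h : x = p
      · exact ⟨y, hyC, fun e => hxy (h.trans e.symm)⟩
      · exact ⟨x, hxC, h⟩
    have e1 := S.deg_affine hC hzC
    have e2 := hdeg z hzp
    omega
  have hsizeP : P₀.ncard = a + 1 := by
    obtain ⟨x, y, hxC, hyC, hxy⟩ := S.exists_two_off hP₀.1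
    obtain ⟨z, hzC, hzp⟩ : ∃ z, z ∉ P₀ ∧ z ≠ p := by
      by_cases h : x = p
      · exact ⟨y, hyC, fun e => hxy (h.trans e.symm)⟩
      · exact ⟨x, hxC, h⟩
    have e1 := S.deg_proj hP₀ hzC
    have e2 := hdeg z hzp
    omega
  have hclscard : ∀ C : Set M, S.IsAffine C → (S.cls C).ncard = a + 1 := fun C hC => by
    rw [S.cls_ncard hdich hC hP₀, hsizeP]
  obtain ⟨C, hCcls, hCA⟩ : ∃ C ∈ S.cls A, C ≠ A := by
    by_contra hc
    push_neg at hc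
    have hsub : S.cls A ⊆ {A} := fun D hD => hc D hD
    have hle := Set.ncard_le_ncard hsub (Set.toFinite _)
    rw [Set.ncard_singleton, hclscard A hA] at hle
    omega
  have hCaff : S.IsAffine C := S.cls_affine hdich hA C hCcls
  have hCdisj : C ∩ A = ∅ := by
    rcases hCcls.2 with h | h
    · exact absurd h hCA
    · exact h
  obtain ⟨D, hDcls, hDC⟩ : ∃ D ∈ S.cls B, D ∩ C = ∅ := by
    by_contra hc
    push_neg at hc
    set g : Set M → M := fun D => if h : (D ∩ C).Nonempty then h.choose else p with hg
    have hgmem : ∀ D ∈ S.cls B, g D ∈ D ∩ C := by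
      intro D hD
      have hne' := hc D hD
      simp only [hg, dif_pos hne']
      exact hne'.choose_spec
    have hinj : Set.InjOn g (S.cls B) := by
      intro D₁ hd1 D₂ hd2 heq
      by_contra hne'
      have hd := S.cls_disjoint hB D₁ hd1 D₂ hd2 hne'
      have hx : g D₁ ∈ D₁ ∩ D₂ := ⟨(hgmem D₁ hd1).1, by rw [heq]; exact (hgmem D₂ hd2).1⟩
      rw [hd] at hx
      exact Set.notMem_empty _ hx
    have hsub : g '' S.cls B ⊆ C := by
      rintro _ ⟨D, hD, rfl⟩
      exact (hgmem D hD).2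
    have hle := Set.ncard_le_ncard hsub (Set.toFinite _)
    rw [Set.ncard_image_of_injOn hinj, hclscard B hB, hsize C hCaff] at hle
    omega
  have hDaff : S.IsAffine D := S.cls_affine hdich hB D hDcls
  have hAclsC : A ∈ S.cls C := ⟨hA.1, Or.inr (by rw [Set.inter_comm]; exact hCdisj)⟩
  have hDclsC : D ∈ S.cls C := ⟨hDaff.1, Or.inr hDC⟩
  by_cases hDB : D = B
  · subst hDB
    have hd := S.cls_disjoint hCaff A hAclsC D hDclsC hAB
    have : p ∈ A ∩ D := ⟨hpA, hpB⟩
    rw [hd] at this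
    exact Set.notMem_empty p this
  · have hDB' : D ∩ B = ∅ := by
      rcases hDcls.2 with h | h
      · exact absurd h hDB
      · exact h
    have hDA : D ≠ A := by
      rintro rfl
      have : p ∈ D ∩ B := ⟨hpA, hpB⟩
      rw [hDB'] at this
      exact Set.notMem_empty p this
    have hADdisj : A ∩ D = ∅ := S.cls_disjoint hCaff A hAclsC D hDclsC (Ne.symm hDA)
    have hAclsD : A ∈ S.cls D := ⟨hA.1, Or.inr hADdisj⟩
    have hBclsD : B ∈ S.cls D := ⟨hB.1, Or.inr (by rw [Set.inter_comm]; exact hDB')⟩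
    have hd := S.cls_disjoint hDaff A hAclsD B hBclsD hAB
    have : p ∈ A ∩ B := ⟨hpA, hpB⟩
    rw [hd] at this
    exact Set.notMem_empty p this

lemma exists_unique_affine [Finite M]
    (hdich : ∀ L ∈ S.lines, S.IsAffine L ∨ S.IsProjective L)
    (hex_aff : ∃ A : Set M, S.IsAffine A)
    (hex_proj : ∃ L : Set M, S.IsProjective L)
    (x : M) : ∃! A, S.IsAffine A ∧ x ∈ A := by
  obtain ⟨A₀, hA₀⟩ := hex_aff
  have key : ∀ A A' : Set M, S.IsAffine A → S.IsAffine A' → x ∈ A → x ∈ A' → A = A' := by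
    intro A A' hA hA' hx hx'
    rcases S.affine_parallel hdich hex_proj hA hA' with h | h
    · exact h
    · exact absurd (show x ∈ A ∩ A' from ⟨hx, hx'⟩) (by rw [h]; exact Set.notMem_empty x)
  by_cases hx : x ∈ A₀
  · exact ⟨A₀, ⟨hA₀, hx⟩, fun A ⟨hA, hxA⟩ => key A A₀ hA hA₀ hxA hx⟩
  · obtain ⟨K, ⟨hK, hxK, hdisj⟩, -⟩ := hA₀.2 x hx
    have hKaff := S.affine_of_disjoint hdich hA₀ hK hdisj
    exact ⟨K, ⟨hKaff, hxK⟩, fun A ⟨hA, hxA⟩ => key A K hA hKaff hxA hxK⟩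

end LinearSpace

/-- In a finite linear space in which every line is affine or projective, with both
kinds of lines present, the structure extended by one point at infinity is a
projective plane: two distinct points lie on exactly one common line, two distinct
lines meet in exactly one point, and there is a quadrangle. -/
theorem extended_structure_is_projective_plane {M : Type*} [Finite M]
    (S : LinearSpace M)
    (hdich : ∀ L ∈ S.lines, S.IsAffine L ∨ S.IsProjective L)
    (hex_aff : ∃ A : Set M, S.IsAffine A)
    (hex_proj : ∃ L : Set M, S.IsProjective L) :
    (∀ p q : Option M, p ≠ q → ∃! K, K ∈ S.extLines ∧ p ∈ K ∧ q ∈ K) ∧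
    (∀ K₁ ∈ S.extLines, ∀ K₂ ∈ S.extLines, K₁ ≠ K₂ → ∃! x, x ∈ K₁ ∧ x ∈ K₂) ∧
    (∃ a b c d : Option M, a ≠ b ∧ a ≠ c ∧ a ≠ d ∧ b ≠ c ∧ b ≠ d ∧ c ≠ d ∧
      ∀ K ∈ S.extLines, ¬ (a ∈ K ∧ b ∈ K ∧ c ∈ K) ∧ ¬ (a ∈ K ∧ b ∈ K ∧ d ∈ K) ∧
        ¬ (a ∈ K ∧ c ∈ K ∧ d ∈ K) ∧ ¬ (b ∈ K ∧ c ∈ K ∧ d ∈ K)) := by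
  classical
  refine ⟨?_, ?_, ?_⟩
  · -- two points lie on a unique line
    intro p q hpq
    have key : ∀ x : M, ∃! K, K ∈ S.extLines ∧ (none : Option M) ∈ K ∧ some x ∈ K := by
      intro x
      obtain ⟨Ax, ⟨hAx, hxAx⟩, huA⟩ := S.exists_unique_affine hdich hex_aff hex_proj x
      refine ⟨insert none (some '' Ax),
        ⟨Or.inr ⟨Ax, hAx, rfl⟩, Set.mem_insert _ _,
          Set.mem_insert_of_mem _ ⟨x, hxAx, rfl⟩⟩, ?_⟩
      rintro K ⟨hK, hnK, hxK⟩
      rcases hK with ⟨L, hL, rfl⟩ | ⟨A, hA, rfl⟩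
      · exact absurd hnK (by simp)
      · have hxA : x ∈ A := by simpa using hxK
        rw [huA A ⟨hA, hxA⟩]
    rcases p with _ | x <;> rcases q with _ | y
    · exact absurd rfl hpq
    · obtain ⟨K, hK, hu⟩ := key y
      exact ⟨K, ⟨hK.1, hK.2.1, hK.2.2⟩, fun K' h' => hu K' ⟨h'.1, h'.2.1, h'.2.2⟩⟩
    · obtain ⟨K, hK, hu⟩ := key x
      exact ⟨K, ⟨hK.1, hK.2.2, hK.2.1⟩, fun K' h' => hu K' ⟨h'.1, h'.2.2, h'.2.1⟩⟩
    · have hxy : x ≠ y := fun h => hpq (by rw [h])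
      obtain ⟨hLmem, hxL, hyL⟩ := S.join_spec x y hxy
      have huniq : ∀ L' ∈ S.lines, x ∈ L' → y ∈ L' → L' = S.join x y hxy :=
        fun L' h1 h2 h3 => S.join_eq hxy h1 h2 h3
      rcases hdich (S.join x y hxy) hLmem with hLaff | hLproj
      · refine ⟨insert none (some '' S.join x y hxy),
          ⟨Or.inr ⟨_, hLaff, rfl⟩, by simp [hxL], by simp [hyL]⟩, ?_⟩
        rintro K ⟨hK, hxK, hyK⟩
        rcases hK with ⟨L', hL', rfl⟩ | ⟨A, hA, rfl⟩
        · have hx' : x ∈ L' := by simpa using hxK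
          have hy' : y ∈ L' := by simpa using hyK
          exact absurd (huniq L' hL'.1 hx' hy' ▸ hL')
            (fun h => S.not_affine_and_projective hLaff h)
        · have hx' : x ∈ A := by simpa using hxK
          have hy' : y ∈ A := by simpa using hyK
          rw [huniq A hA.1 hx' hy']
      · refine ⟨some '' S.join x y hxy,
          ⟨Or.inl ⟨_, hLproj, rfl⟩, ⟨x, hxL, rfl⟩, ⟨y, hyL, rfl⟩⟩, ?_⟩
        rintro K ⟨hK, hxK, hyK⟩
        rcases hK with ⟨L', hL', rfl⟩ | ⟨A, hA, rfl⟩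
        · have hx' : x ∈ L' := by simpa using hxK
          have hy' : y ∈ L' := by simpa using hyK
          rw [huniq L' hL'.1 hx' hy']
        · have hx' : x ∈ A := by simpa using hxK
          have hy' : y ∈ A := by simpa using hyK
          exact absurd (huniq A hA.1 hx' hy' ▸ hA)
            (fun h => S.not_affine_and_projective h hLproj)
  · -- two lines meet in a unique point
    rintro K₁ hK₁ K₂ hK₂ hne
    rcases hK₁ with ⟨L₁, hL₁, rfl⟩ | ⟨A₁, hA₁, rfl⟩ <;>
      rcases hK₂ with ⟨L₂, hL₂, rfl⟩ | ⟨A₂, hA₂, rfl⟩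
    · have hLne : L₂ ≠ L₁ := fun h => hne (by rw [h])
      obtain ⟨z, hz⟩ := hL₁.2 L₂ hL₂.1 hLne
      refine ⟨some z, ⟨⟨z, hz.1, rfl⟩, ⟨z, hz.2, rfl⟩⟩, ?_⟩
      rintro x ⟨hx1, hx2⟩
      obtain ⟨w, hw1, rfl⟩ := hx1
      have hw2 : w ∈ L₂ := by simpa using hx2
      exact congrArg some
        (S.inter_subsingleton hL₁.1 hL₂.1 (Ne.symm hLne) ⟨hw1, hw2⟩ ⟨hz.1, hz.2⟩)
    · have hne' : A₂ ≠ L₁ := fun h => S.not_affine_and_projective hA₂ (h ▸ hL₁)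
      obtain ⟨z, hz⟩ := hL₁.2 A₂ hA₂.1 hne'
      refine ⟨some z, ⟨⟨z, hz.1, rfl⟩, by simp [hz.2]⟩, ?_⟩
      rintro x ⟨hx1, hx2⟩
      obtain ⟨w, hw1, rfl⟩ := hx1
      have hw2 : w ∈ A₂ := by simpa using hx2
      exact congrArg some
        (S.inter_subsingleton hL₁.1 hA₂.1 (fun h => hne' h.symm) ⟨hw1, hw2⟩ ⟨hz.1, hz.2⟩)
    · have hne' : A₁ ≠ L₂ := fun h => S.not_affine_and_projective hA₁ (h ▸ hL₂)
      obtain ⟨z, hz⟩ := hL₂.2 A₁ hA₁.1 hne'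
      refine ⟨some z, ⟨by simp [hz.2], ⟨z, hz.1, rfl⟩⟩, ?_⟩
      rintro x ⟨hx1, hx2⟩
      obtain ⟨w, hw1, rfl⟩ := hx2
      have hw2 : w ∈ A₁ := by simpa using hx1
      exact congrArg some
        (S.inter_subsingleton hA₁.1 hL₂.1 hne' ⟨hw2, hw1⟩ ⟨hz.2, hz.1⟩)
    · have hAne : A₁ ≠ A₂ := fun h => hne (by rw [h])
      have hdisj : A₁ ∩ A₂ = ∅ :=
        (S.affine_parallel hdich hex_proj hA₁ hA₂).resolve_left hAne
      refine ⟨none, ⟨Set.mem_insert _ _, Set.mem_insert _ _⟩, ?_⟩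
      rintro x ⟨hx1, hx2⟩
      rcases x with _ | w
      · rfl
      · have h1 : w ∈ A₁ := by simpa using hx1
        have h2 : w ∈ A₂ := by simpa using hx2
        have hw : w ∈ A₁ ∩ A₂ := ⟨h1, h2⟩
        rw [hdisj] at hw
        exact absurd hw (Set.notMem_empty w)
  · -- quadrangle
    obtain ⟨A₀, hA₀⟩ := hex_aff
    obtain ⟨P₀, hP₀⟩ := hex_proj
    have hAP : A₀ ≠ P₀ := fun h => S.not_affine_and_projective hA₀ (h ▸ hP₀)
    obtain ⟨e, heP, heA⟩ := hP₀.2 A₀ hA₀.1 hAP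
    obtain ⟨u, v, w, huP, hvP, hwP, huv, huw, hvw⟩ := S.exists_three_points P₀ hP₀.1
    obtain ⟨a, b, haP, hbP, hab, hae, hbe⟩ :
        ∃ a b, a ∈ P₀ ∧ b ∈ P₀ ∧ a ≠ b ∧ a ≠ e ∧ b ≠ e := by
      by_cases h : u = e
      · exact ⟨v, w, hvP, hwP, hvw, fun e' => huv (h.trans e'.symm),
          fun e' => huw (h.trans e'.symm)⟩
      · by_cases h2 : v = e
        · exact ⟨u, w, huP, hwP, huw, h, fun e' => hvw (h2.trans e'.symm)⟩
        · exact ⟨u, v, huP, hvP, huv, h, h2⟩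
    obtain ⟨u', v', w', huA, hvA, hwA, huv', huw', hvw'⟩ := S.exists_three_points A₀ hA₀.1
    obtain ⟨c, hcA, hce⟩ : ∃ c, c ∈ A₀ ∧ c ≠ e := by
      by_cases h : u' = e
      · exact ⟨v', hvA, fun e' => huv' (h.trans e'.symm)⟩
      · exact ⟨u', huA, h⟩
    have hsub := S.inter_subsingleton hP₀.1 hA₀.1 (Ne.symm hAP)
    have haA : a ∉ A₀ := fun h => hae (hsub ⟨haP, h⟩ ⟨heP, heA⟩)
    have hbA : b ∉ A₀ := fun h => hbe (hsub ⟨hbP, h⟩ ⟨heP, heA⟩)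
    have hcP : c ∉ P₀ := fun h => hce (hsub ⟨h, hcA⟩ ⟨heP, heA⟩)
    have hac : a ≠ c := fun h => haA (h ▸ hcA)
    have hbc : b ≠ c := fun h => hbA (h ▸ hcA)
    have huaff : ∀ x : M, ∀ A A' : Set M, S.IsAffine A → S.IsAffine A' →
        x ∈ A → x ∈ A' → A = A' := by
      intro x A A' h1 h2 hx1 hx2
      obtain ⟨Ax, -, hu⟩ := S.exists_unique_affine hdich ⟨A₀, hA₀⟩ ⟨P₀, hP₀⟩ x
      rw [hu A ⟨h1, hx1⟩, hu A' ⟨h2, hx2⟩]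
    refine ⟨some a, some b, some c, none, by simp [hab], by simp [hac], by simp,
      by simp [hbc], by simp, by simp, ?_⟩
    intro K hK
    rcases hK with ⟨L, hL, rfl⟩ | ⟨A, hA, rfl⟩
    · refine ⟨?_, ?_, ?_, ?_⟩
      · rintro ⟨ha', hb', hc'⟩
        have haL : a ∈ L := by simpa using ha'
        have hbL : b ∈ L := by simpa using hb'
        have hcL : c ∈ L := by simpa using hc'
        have : L = P₀ := (S.join_eq hab hL.1 haL hbL).trans
          (S.join_eq hab hP₀.1 haP hbP).symm
        exact hcP (this ▸ hcL)
      · rintro ⟨-, -, hn⟩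
        exact absurd hn (by simp)
      · rintro ⟨-, -, hn⟩
        exact absurd hn (by simp)
      · rintro ⟨-, -, hn⟩
        exact absurd hn (by simp)
    · have hAaff := hA
      refine ⟨?_, ?_, ?_, ?_⟩
      · rintro ⟨ha', hb', -⟩
        have haL : a ∈ A := by simpa using ha'
        have hbL : b ∈ A := by simpa using hb'
        have : A = P₀ := (S.join_eq hab hA.1 haL hbL).trans
          (S.join_eq hab hP₀.1 haP hbP).symm
        exact S.not_affine_and_projective (this ▸ hAaff) hP₀
      · rintro ⟨ha', hb', -⟩
        have haL : a ∈ A := by simpa using ha'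
        have hbL : b ∈ A := by simpa using hb'
        have : A = P₀ := (S.join_eq hab hA.1 haL hbL).trans
          (S.join_eq hab hP₀.1 haP hbP).symm
        exact S.not_affine_and_projective (this ▸ hAaff) hP₀
      · rintro ⟨ha', hc', -⟩
        have haL : a ∈ A := by simpa using ha'
        have hcL : c ∈ A := by simpa using hc'
        exact haA (huaff c A A₀ hAaff hA₀ hcL hcA ▸ haL)
      · rintro ⟨hb', hc', -⟩
        have hbL : b ∈ A := by simpa using hb'
        have hcL : c ∈ A := by simpa using hc'
        exact hbA (huaff c A A₀ hAaff hA₀ hcL hcA ▸ hbL)
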